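/- With the partial specializations Ξ_Δ (Δ ⊆ C) of the generic coefficients of the system ags(P̃) as above, the ideal I_{Δ,Y} generated by Ξ_Δ(P_1),…,Ξ_Δ(P_L) in D_Δ[Y^{±}], intersected with K_Δ[C̄\Δ ∪ Ξ_Δ(𝐜)], is a prime ideal, where K_Δ is the fraction field ℚ(Ξ(C̄ ∩ Δ)) and 𝐜 = {c_1,…,c_L} are the distinguished (leading) coefficients. -/

import Mathlib

open Finset

/-- Lemma lem-prime: primality of the partially specialized
elimination ideal.  After applying a partial specialization `Ξ_Δ` to the
generic system `P_l = c_l T_l + Σ_h c_{l,h} T_{l,h}`, the polynomials have the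
form `Ξ_Δ(P_l) = x_l T_l + Q_l` over the field `K_Δ = ℚ(Ξ(C̄ ∩ Δ))`, where the
(possibly specialized) leading coefficients `x_l = Ξ_Δ(c_l)` — the untouched
`c_l`, or derivatives `∂^k 𝔞_i` of fresh differential indeterminates — are
pairwise distinct indeterminates of the variable set
`W = C̄\Δ ∪ Ξ_Δ(𝐜)`, and the tails `Q_l` do not involve any of these leading
indeterminates.  Then the ideal generated by the `Ξ_Δ(P_l)` in
`K_Δ[W][Y^{±}]`, intersected with `K_Δ[W]`, is a prime ideal. -/
theorem partially_specialized_elimination_ideal_isPrime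
    (K : Type*) [Field K] (W : Type*) (m L : ℕ)
    (w : Fin L → W) (hw : Function.Injective w)
    (T : Fin L → (Fin m →₀ ℤ))
    (Q : Fin L → AddMonoidAlgebra (MvPolynomial W K) (Fin m →₀ ℤ))
    (hQ : ∀ l (e : Fin m →₀ ℤ) (l' : Fin L), w l' ∉ ((Q l).coeff e).vars)
    (P : Fin L → AddMonoidAlgebra (MvPolynomial W K) (Fin m →₀ ℤ))
    (hP : ∀ l, P l =
      AddMonoidAlgebra.single (T l) (MvPolynomial.X (w l)) + Q l) :
    (Ideal.comap
        (algebraMap (MvPolynomial W K)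
          (AddMonoidAlgebra (MvPolynomial W K) (Fin m →₀ ℤ)))
        (Ideal.span (Set.range P))).IsPrime := by
  classical
  haveI : IsDomain (AddMonoidAlgebra (MvPolynomial W K) (Fin m →₀ ℤ)) :=
    NoZeroDivisors.to_isDomain _
  -- the substitution sending the leading indeterminate X (w l) to -(Q l) * T l⁻¹
  set σ : W → AddMonoidAlgebra (MvPolynomial W K) (Fin m →₀ ℤ) := fun v =>
    if h : ∃ l, w l = v then
      -(Q h.choose * AddMonoidAlgebra.single (-(T h.choose)) 1)
    else algebraMap (MvPolynomial W K) _ (MvPolynomial.X v) with hσdef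
  have hσw : ∀ l, σ (w l) = -(Q l * AddMonoidAlgebra.single (-(T l)) 1) := by
    intro l
    have h : ∃ l', w l' = w l := ⟨l, rfl⟩
    have hch : h.choose = l := hw h.choose_spec
    simp only [hσdef, dif_pos h, hch]
  have hσv : ∀ v, (∀ l, w l ≠ v) →
      σ v = algebraMap (MvPolynomial W K) _ (MvPolynomial.X v) := by
    intro v hv
    have h : ¬ ∃ l, w l = v := by push_neg; exact hv
    simp only [hσdef, dif_neg h]
  set θ : MvPolynomial W K →+* AddMonoidAlgebra (MvPolynomial W K) (Fin m →₀ ℤ) :=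
    MvPolynomial.eval₂Hom
      ((algebraMap (MvPolynomial W K)
        (AddMonoidAlgebra (MvPolynomial W K) (Fin m →₀ ℤ))).comp MvPolynomial.C) σ
    with hθdef
  have hθX : ∀ v, θ (MvPolynomial.X v) = σ v := fun v =>
    MvPolynomial.eval₂Hom_X' _ _ _
  -- θ acts as the algebra map on polynomials avoiding the leading indeterminates
  have hθconst : ∀ p : MvPolynomial W K, (∀ l, w l ∉ p.vars) →
      θ p = algebraMap (MvPolynomial W K) _ p := by
    intro p hp
    have h1 : θ p = MvPolynomial.eval₂
        ((algebraMap (MvPolynomial W K)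
          (AddMonoidAlgebra (MvPolynomial W K) (Fin m →₀ ℤ))).comp MvPolynomial.C)
        (fun v => algebraMap (MvPolynomial W K) _ (MvPolynomial.X v)) p := by
      simp only [hθdef, MvPolynomial.coe_eval₂Hom]
      apply MvPolynomial.eval₂_congr
      intro i c hic hc
      have hiv : i ∈ p.vars := by
        rw [MvPolynomial.mem_vars]
        exact ⟨c, (MvPolynomial.mem_support_iff).2 hc, hic⟩
      apply hσv
      intro l hl
      exact hp l (hl ▸ hiv)
    rw [h1]
    have h2 := MvPolynomial.eval₂_comp_left
      (algebraMap (MvPolynomial W K) (AddMonoidAlgebra (MvPolynomial W K) (Fin m →₀ ℤ)))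
      (MvPolynomial.C (R := K) (σ := W)) MvPolynomial.X p
    rw [MvPolynomial.eval₂_eta] at h2
    exact h2.symm
  -- lift θ to a map on the Laurent polynomial ring, identity on monomials
  set Θ : AddMonoidAlgebra (MvPolynomial W K) (Fin m →₀ ℤ) →+*
      AddMonoidAlgebra (MvPolynomial W K) (Fin m →₀ ℤ) :=
    AddMonoidAlgebra.liftNCRingHom θ
      (AddMonoidAlgebra.of (MvPolynomial W K) (Fin m →₀ ℤ))
      (fun _ _ => Commute.all _ _) with hΘdef
  have hΘsingle : ∀ (a : Fin m →₀ ℤ) (b : MvPolynomial W K),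
      Θ (AddMonoidAlgebra.single a b) = θ b * AddMonoidAlgebra.single a 1 := by
    intro a b
    show AddMonoidAlgebra.liftNC (θ : MvPolynomial W K →+ _)
      (AddMonoidAlgebra.of (MvPolynomial W K) (Fin m →₀ ℤ)) (AddMonoidAlgebra.single a b)
      = θ b * AddMonoidAlgebra.single a 1
    rw [AddMonoidAlgebra.liftNC_single]
    rfl
  have halg : ∀ p : MvPolynomial W K,
      algebraMap (MvPolynomial W K) (AddMonoidAlgebra (MvPolynomial W K) (Fin m →₀ ℤ)) p
        = AddMonoidAlgebra.single 0 p := fun _ => rfl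
  have hone : (1 : AddMonoidAlgebra (MvPolynomial W K) (Fin m →₀ ℤ))
      = AddMonoidAlgebra.single 0 1 := rfl
  have hΘalg : ∀ p : MvPolynomial W K,
      Θ (algebraMap (MvPolynomial W K) _ p) = θ p := by
    intro p
    rw [halg, hΘsingle, ← hone, mul_one]
  -- Θ is the identity on Laurent polynomials avoiding the leading indeterminates
  have hΘid : ∀ q : AddMonoidAlgebra (MvPolynomial W K) (Fin m →₀ ℤ),
      (∀ (e : Fin m →₀ ℤ) (l : Fin L), w l ∉ (q.coeff e).vars) → Θ q = q := by
    intro q hq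
    have hrep : q = q.coeff.sum fun a b => AddMonoidAlgebra.single a b :=
      (AddMonoidAlgebra.sum_coeff_single q).symm
    conv_lhs => rw [hrep]
    rw [map_finsuppSum]
    conv_rhs => rw [hrep]
    apply Finsupp.sum_congr
    intro a ha
    rw [hΘsingle, hθconst _ (fun l => hq a l), halg,
      AddMonoidAlgebra.single_mul_single, zero_add, mul_one]
  -- Θ kills the generators
  have hΘP : ∀ l, Θ (P l) = 0 := by
    intro l
    rw [hP l, map_add, hΘsingle, hθX, hσw, hΘid (Q l) (fun e l' => hQ l e l')]
    have h1 : AddMonoidAlgebra.single (-(T l)) (1 : MvPolynomial W K) *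
        AddMonoidAlgebra.single (T l) 1 = 1 := by
      rw [AddMonoidAlgebra.single_mul_single, neg_add_cancel, one_mul]
      rfl
    have h2 : -(Q l * AddMonoidAlgebra.single (-(T l)) 1) * AddMonoidAlgebra.single (T l) 1
        = -(Q l * (AddMonoidAlgebra.single (-(T l)) 1 * AddMonoidAlgebra.single (T l) 1)) := by
      ring
    rw [h2, h1, mul_one, neg_add_cancel]
  -- the key identity: the contracted ideal is the kernel of θ
  have key : Ideal.comap (algebraMap (MvPolynomial W K)
        (AddMonoidAlgebra (MvPolynomial W K) (Fin m →₀ ℤ)))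
      (Ideal.span (Set.range P)) = RingHom.ker θ := by
    ext p
    simp only [Ideal.mem_comap, RingHom.mem_ker]
    constructor
    · intro hp
      have hle : Ideal.span (Set.range P) ≤ RingHom.ker Θ := by
        rw [Ideal.span_le]
        rintro _ ⟨l, rfl⟩
        exact hΘP l
      have := hle hp
      rwa [RingHom.mem_ker, hΘalg] at this
    · intro hp
      set I := Ideal.span (Set.range P) with hIdef
      have hcomp : (Ideal.Quotient.mk I).comp (algebraMap (MvPolynomial W K)
            (AddMonoidAlgebra (MvPolynomial W K) (Fin m →₀ ℤ)))
          = (Ideal.Quotient.mk I).comp θ := by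
        apply MvPolynomial.ringHom_ext
        · intro r
          simp only [RingHom.comp_apply, hθdef, MvPolynomial.eval₂Hom_C,
            RingHom.comp_apply]
        · intro v
          simp only [RingHom.comp_apply, hθX]
          by_cases h : ∃ l, w l = v
          · obtain ⟨l, rfl⟩ := h
            rw [hσw]
            rw [Ideal.Quotient.mk_eq_mk_iff_sub_mem, sub_neg_eq_add]
            have hPl : P l ∈ I := Ideal.subset_span ⟨l, rfl⟩
            have hmem : P l * AddMonoidAlgebra.single (-(T l)) (1 : MvPolynomial W K)
                ∈ I := Ideal.mul_mem_right _ _ hPl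
            have hexp : P l * AddMonoidAlgebra.single (-(T l)) (1 : MvPolynomial W K)
                = algebraMap (MvPolynomial W K)
                    (AddMonoidAlgebra (MvPolynomial W K) (Fin m →₀ ℤ))
                    (MvPolynomial.X (w l))
                  + Q l * AddMonoidAlgebra.single (-(T l)) 1 := by
              rw [hP l, add_mul, AddMonoidAlgebra.single_mul_single, add_neg_cancel,
                mul_one, halg]
            rwa [hexp] at hmem
          · push_neg at h
            rw [hσv _ h]
      have hpq := RingHom.congr_fun hcomp p
      simp only [RingHom.comp_apply] at hpq
      rw [hp, map_zero] at hpq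
      exact (Ideal.Quotient.eq_zero_iff_mem).mp hpq
  rw [key]
  exact RingHom.ker_isPrime θ
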